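/- In the group G₂ presented by generators a, b, c and relators a², b², c², (ab)³, (bc)³, (ac)³, the subgroup H₂ generated by the elements cbca and abac is a normal abelian subgroup of G₂, and the quotient group G₂/H₂ has at most 6 elements (every coset is one of those of id, a, b, ab, ba, aba). -/

import Mathlib

set_option maxHeartbeats 1000000 in

theorem stmt_8 :
    let G₂ := PresentedGroup
      ({FreeGroup.of 0 ^ 2, FreeGroup.of 1 ^ 2, FreeGroup.of 2 ^ 2,
        (FreeGroup.of 0 * FreeGroup.of 1) ^ 3,
        (FreeGroup.of 1 * FreeGroup.of 2) ^ 3,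
        (FreeGroup.of 0 * FreeGroup.of 2) ^ 3} :
        Set (FreeGroup (Fin 3)))
    let a : G₂ := PresentedGroup.of 0
    let b : G₂ := PresentedGroup.of 1
    let c : G₂ := PresentedGroup.of 2
    let H₂ : Subgroup G₂ := Subgroup.closure {c * b * c * a, a * b * a * c}
    H₂.Normal ∧
    (∀ x ∈ H₂, ∀ y ∈ H₂, x * y = y * x) ∧
    Nat.card (G₂ ⧸ H₂) ≤ 6 ∧
    (∀ x : G₂ ⧸ H₂, ∃ g ∈ ({1, a, b, a * b, b * a, a * b * a} : Set G₂),
      x = (g : G₂ ⧸ H₂)) := by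
  intro G₂ a b c H₂
  have key : ∀ r ∈ ({FreeGroup.of 0 ^ 2, FreeGroup.of 1 ^ 2, FreeGroup.of 2 ^ 2,
        (FreeGroup.of 0 * FreeGroup.of 1) ^ 3,
        (FreeGroup.of 1 * FreeGroup.of 2) ^ 3,
        (FreeGroup.of 0 * FreeGroup.of 2) ^ 3} :
        Set (FreeGroup (Fin 3))), (PresentedGroup.mk _ r : G₂) = 1 :=
    fun r hr => (QuotientGroup.eq_one_iff r).mpr (Subgroup.subset_normalClosure hr)
  -- basic relations
  have ha : a * a = 1 := by
    have := key _ (show _ ∈ _ by left; rfl); rw [map_pow, sq] at this; exact this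
  have hb : b * b = 1 := by
    have := key _ (show _ ∈ _ by right; left; rfl); rw [map_pow, sq] at this; exact this
  have hc : c * c = 1 := by
    have := key _ (show _ ∈ _ by right; right; left; rfl)
    rw [map_pow, sq] at this; exact this
  have hab3 : (a * b) ^ 3 = 1 := by
    have := key _ (show _ ∈ _ by right; right; right; left; rfl)
    rw [map_pow, map_mul] at this; exact this
  have hbc3 : (b * c) ^ 3 = 1 := by
    have := key _ (show _ ∈ _ by right; right; right; right; left; rfl)
    rw [map_pow, map_mul] at this; exact this
  have hac3 : (a * c) ^ 3 = 1 := by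
    have := key _ (show _ ∈ _ by right; right; right; right; right; rfl)
    rw [map_pow, map_mul] at this; exact this
  have ainv : a⁻¹ = a := inv_eq_of_mul_eq_one_right ha
  have binv : b⁻¹ = b := inv_eq_of_mul_eq_one_right hb
  have cinv : c⁻¹ = c := inv_eq_of_mul_eq_one_right hc
  -- braid relations
  have braid : ∀ x y : G₂, x⁻¹ = x → y⁻¹ = y → (x * y) ^ 3 = 1 → y * (x * y) = x * (y * x) := by
    intro x y hx hy h3
    have h6 : (x * (y * x)) * (y * (x * y)) = 1 := by
      have e : (x * y) ^ 3 = (x * (y * x)) * (y * (x * y)) := by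
        rw [pow_three']; simp only [mul_assoc]
      rw [← e]; exact h3
    have h7 : x * (y * x) = (y * (x * y))⁻¹ := eq_inv_of_mul_eq_one_left h6
    have h8 : (y * (x * y))⁻¹ = y * (x * y) := by
      simp [mul_inv_rev, hx, hy, mul_assoc]
    rw [h7, h8]
  have hbab : b * (a * b) = a * (b * a) := braid a b ainv binv hab3
  have hcbc : c * (b * c) = b * (c * b) := braid b c binv cinv hbc3
  have hcac : c * (a * c) = a * (c * a) := braid a c ainv cinv hac3
  -- rewrite rules with a trailing factor
  have haa : ∀ g : G₂, a * (a * g) = g := fun g => by rw [← mul_assoc, ha, one_mul]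
  have hbb : ∀ g : G₂, b * (b * g) = g := fun g => by rw [← mul_assoc, hb, one_mul]
  have hcc : ∀ g : G₂, c * (c * g) = g := fun g => by rw [← mul_assoc, hc, one_mul]
  have hbabg : ∀ g : G₂, b * (a * (b * g)) = a * (b * (a * g)) := fun g => by
    rw [show b * (a * (b * g)) = (b * (a * b)) * g from by simp only [mul_assoc], hbab]
    simp only [mul_assoc]
  have hcbcg : ∀ g : G₂, c * (b * (c * g)) = b * (c * (b * g)) := fun g => by
    rw [show c * (b * (c * g)) = (c * (b * c)) * g from by simp only [mul_assoc], hcbc]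
    simp only [mul_assoc]
  have hcacg : ∀ g : G₂, c * (a * (c * g)) = a * (c * (a * g)) := fun g => by
    rw [show c * (a * (c * g)) = (c * (a * c)) * g from by simp only [mul_assoc], hcac]
    simp only [mul_assoc]
  -- key word identities
  have I1 : a * (c * b * c * a) * a⁻¹ = (c * b * c * a)⁻¹ := by
    simp only [mul_inv_rev, ainv, binv, cinv]
    simp only [mul_assoc, haa, hbb, hcc, hbabg, hcbcg, hcacg, hbab, hcbc, hcac, ha, hb, hc,
      mul_one, one_mul]
  have I2 : a * (a * b * a * c) * a⁻¹ = (c * b * c * a) * (a * b * a * c) := by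
    simp only [mul_inv_rev, ainv, binv, cinv]
    simp only [mul_assoc, haa, hbb, hcc, hbabg, hcbcg, hcacg, hbab, hcbc, hcac, ha, hb, hc,
      mul_one, one_mul]
  have I3 : b * (c * b * c * a) * b⁻¹ = (a * b * a * c)⁻¹ := by
    simp only [mul_inv_rev, ainv, binv, cinv]
    simp only [mul_assoc, haa, hbb, hcc, hbabg, hcbcg, hcacg, hbab, hcbc, hcac, ha, hb, hc,
      mul_one, one_mul]
  have I4 : b * (a * b * a * c) * b⁻¹ = (c * b * c * a)⁻¹ := by
    simp only [mul_inv_rev, ainv, binv, cinv]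
    simp only [mul_assoc, haa, hbb, hcc, hbabg, hcbcg, hcacg, hbab, hcbc, hcac, ha, hb, hc,
      mul_one, one_mul]
  have I5 : c * (c * b * c * a) * c⁻¹ = (c * b * c * a) * (a * b * a * c) := by
    simp only [mul_inv_rev, ainv, binv, cinv]
    simp only [mul_assoc, haa, hbb, hcc, hbabg, hcbcg, hcacg, hbab, hcbc, hcac, ha, hb, hc,
      mul_one, one_mul]
  have I6 : c * (a * b * a * c) * c⁻¹ = (a * b * a * c)⁻¹ := by
    simp only [mul_inv_rev, ainv, binv, cinv]
    simp only [mul_assoc, haa, hbb, hcc, hbabg, hcbcg, hcacg, hbab, hcbc, hcac, ha, hb, hc,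
      mul_one, one_mul]
  have I7 : (c * b * c * a) * (a * b * a * c) = (a * b * a * c) * (c * b * c * a) := by
    simp only [mul_assoc, haa, hbb, hcc, hbabg, hcbcg, hcacg, hbab, hcbc, hcac, ha, hb, hc,
      mul_one, one_mul]
  -- membership of generators
  have hx0 : (c * b * c * a) ∈ H₂ := Subgroup.subset_closure (Set.mem_insert _ _)
  have hy0 : (a * b * a * c) ∈ H₂ := Subgroup.subset_closure (Set.mem_insert_of_mem _ rfl)
  -- conjugation by a fixed element preserving the generators preserves H₂
  have conj_gen : ∀ s : G₂, s * (c * b * c * a) * s⁻¹ ∈ H₂ → s * (a * b * a * c) * s⁻¹ ∈ H₂ →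
      ∀ n ∈ H₂, s * n * s⁻¹ ∈ H₂ := by
    intro s h1 h2 n hn
    induction hn using Subgroup.closure_induction with
    | mem t ht =>
        rcases ht with rfl | ht
        · exact h1
        · rcases ht with rfl
          exact h2
    | one => simpa using one_mem H₂
    | mul x y hx hy px py =>
        rw [show s * (x * y) * s⁻¹ = (s * x * s⁻¹) * (s * y * s⁻¹) from by group]
        exact mul_mem px py
    | inv x hx px =>
        rw [show s * x⁻¹ * s⁻¹ = (s * x * s⁻¹)⁻¹ from by group]
        exact inv_mem px
  -- conjugation by generators
  have pa : ∀ n ∈ H₂, a * n * a⁻¹ ∈ H₂ :=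
    conj_gen a (by rw [I1]; exact inv_mem hx0) (by rw [I2]; exact mul_mem hx0 hy0)
  have pb : ∀ n ∈ H₂, b * n * b⁻¹ ∈ H₂ :=
    conj_gen b (by rw [I3]; exact inv_mem hy0) (by rw [I4]; exact inv_mem hx0)
  have pc : ∀ n ∈ H₂, c * n * c⁻¹ ∈ H₂ :=
    conj_gen c (by rw [I5]; exact mul_mem hx0 hy0) (by rw [I6]; exact inv_mem hy0)
  -- conjugation by anything preserves H₂
  have conj_all : ∀ g : G₂, ∀ n ∈ H₂, g * n * g⁻¹ ∈ H₂ := by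
    have main : ∀ g : G₂, (∀ n ∈ H₂, g * n * g⁻¹ ∈ H₂) ∧ (∀ n ∈ H₂, g⁻¹ * n * g ∈ H₂) := by
      intro g
      have hg : g ∈ (⊤ : Subgroup G₂) := trivial
      rw [← PresentedGroup.closure_range_of] at hg
      induction hg using Subgroup.closure_induction with
      | mem s hs =>
          obtain ⟨i, rfl⟩ := hs
          fin_cases i
          · refine ⟨pa, fun n hn => ?_⟩
            show a⁻¹ * n * a ∈ H₂
            rw [ainv]
            simpa only [ainv] using pa n hn
          · refine ⟨pb, fun n hn => ?_⟩
            show b⁻¹ * n * b ∈ H₂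
            rw [binv]
            simpa only [binv] using pb n hn
          · refine ⟨pc, fun n hn => ?_⟩
            show c⁻¹ * n * c ∈ H₂
            rw [cinv]
            simpa only [cinv] using pc n hn
      | one => simp
      | mul x y hx hy px py =>
          constructor
          · intro n hn
            rw [show (x*y) * n * (x*y)⁻¹ = x * (y * n * y⁻¹) * x⁻¹ from by group]
            exact px.1 _ (py.1 n hn)
          · intro n hn
            rw [show (x*y)⁻¹ * n * (x*y) = y⁻¹ * (x⁻¹ * n * x) * y from by group]
            exact py.2 _ (px.2 n hn)
      | inv x hx px =>
          exact ⟨fun n hn => by rw [inv_inv]; exact px.2 n hn, fun n hn => by rw [inv_inv]; exact px.1 n hn⟩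
    exact fun g => (main g).1
  have hNormal : H₂.Normal := ⟨fun n hn g => conj_all g n hn⟩
  haveI := hNormal
  -- commutativity
  have comm : ∀ u ∈ H₂, ∀ v ∈ H₂, u * v = v * u := by
    have gen_comm : ∀ v ∈ H₂, Commute (c*b*c*a) v ∧ Commute (a*b*a*c) v := by
      intro v hv
      induction hv using Subgroup.closure_induction with
      | mem t ht =>
          rcases ht with rfl | ht
          · exact ⟨Commute.refl _, I7.symm⟩
          · rcases ht with rfl
            exact ⟨I7, Commute.refl _⟩
      | one => exact ⟨Commute.one_right _, Commute.one_right _⟩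
      | mul x y hx hy px py => exact ⟨px.1.mul_right py.1, px.2.mul_right py.2⟩
      | inv x hx px => exact ⟨px.1.inv_right, px.2.inv_right⟩
    intro u hu v hv
    induction hu using Subgroup.closure_induction with
    | mem t ht =>
        rcases ht with rfl | ht
        · exact (gen_comm v hv).1
        · rcases ht with rfl
          exact (gen_comm v hv).2
    | one => exact Commute.one_left v
    | mul x y hx hy px py => exact Commute.mul_left px py
    | inv x hx px => exact Commute.inv_left px
  -- quotient relations
  have qa : ((a : G₂) : G₂ ⧸ H₂) * ((a : G₂) : G₂ ⧸ H₂) = 1 := by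
    rw [← QuotientGroup.mk_mul, ha, QuotientGroup.mk_one]
  have qb : ((b : G₂) : G₂ ⧸ H₂) * ((b : G₂) : G₂ ⧸ H₂) = 1 := by
    rw [← QuotientGroup.mk_mul, hb, QuotientGroup.mk_one]
  have qAinv : ((a : G₂) : G₂ ⧸ H₂)⁻¹ = ((a : G₂) : G₂ ⧸ H₂) := inv_eq_of_mul_eq_one_right qa
  have qBinv : ((b : G₂) : G₂ ⧸ H₂)⁻¹ = ((b : G₂) : G₂ ⧸ H₂) := inv_eq_of_mul_eq_one_right qb
  have qbab : ((b : G₂) : G₂ ⧸ H₂) * (((a : G₂) : G₂ ⧸ H₂) * ((b : G₂) : G₂ ⧸ H₂))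
      = ((a : G₂) : G₂ ⧸ H₂) * (((b : G₂) : G₂ ⧸ H₂) * ((a : G₂) : G₂ ⧸ H₂)) := by
    rw [← QuotientGroup.mk_mul, ← QuotientGroup.mk_mul, hbab,
      QuotientGroup.mk_mul, QuotientGroup.mk_mul]
  have qaa : ∀ t : G₂ ⧸ H₂, ((a : G₂) : G₂ ⧸ H₂) * (((a : G₂) : G₂ ⧸ H₂) * t) = t :=
    fun t => by rw [← mul_assoc, qa, one_mul]
  have qbb : ∀ t : G₂ ⧸ H₂, ((b : G₂) : G₂ ⧸ H₂) * (((b : G₂) : G₂ ⧸ H₂) * t) = t :=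
    fun t => by rw [← mul_assoc, qb, one_mul]
  have qbabg : ∀ t : G₂ ⧸ H₂,
      ((b : G₂) : G₂ ⧸ H₂) * (((a : G₂) : G₂ ⧸ H₂) * (((b : G₂) : G₂ ⧸ H₂) * t))
      = ((a : G₂) : G₂ ⧸ H₂) * (((b : G₂) : G₂ ⧸ H₂) * (((a : G₂) : G₂ ⧸ H₂) * t)) :=
    fun t => by
      rw [show ((b : G₂) : G₂ ⧸ H₂) * (((a : G₂) : G₂ ⧸ H₂) * (((b : G₂) : G₂ ⧸ H₂) * t))
        = (((b : G₂) : G₂ ⧸ H₂) * (((a : G₂) : G₂ ⧸ H₂) * ((b : G₂) : G₂ ⧸ H₂))) * t from by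
          simp only [mul_assoc], qbab]
      simp only [mul_assoc]
  have hcq : ((c : G₂) : G₂ ⧸ H₂)
      = ((a : G₂) : G₂ ⧸ H₂) * (((b : G₂) : G₂ ⧸ H₂) * ((a : G₂) : G₂ ⧸ H₂)) := by
    rw [← QuotientGroup.mk_mul, ← QuotientGroup.mk_mul]
    symm
    rw [QuotientGroup.eq]
    rw [show (a * (b * a) : G₂)⁻¹ * c = a * b * a * c from by
      simp only [mul_inv_rev, ainv, binv, mul_assoc]]
    exact hy0
  have qc : ((c : G₂) : G₂ ⧸ H₂) * ((c : G₂) : G₂ ⧸ H₂) = 1 := by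
    rw [← QuotientGroup.mk_mul, hc, QuotientGroup.mk_one]
  have qCinv : ((c : G₂) : G₂ ⧸ H₂)⁻¹ = ((c : G₂) : G₂ ⧸ H₂) := inv_eq_of_mul_eq_one_right qc
  -- the coset cover predicate
  set A : G₂ ⧸ H₂ := ((a : G₂) : G₂ ⧸ H₂) with hA
  set B : G₂ ⧸ H₂ := ((b : G₂) : G₂ ⧸ H₂) with hB
  have cover : ∀ x : G₂ ⧸ H₂,
      x = 1 ∨ x = A ∨ x = B ∨ x = A * B ∨ x = B * A ∨ x = A * (B * A) := by
    set p : G₂ ⧸ H₂ → Prop := fun x =>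
      x = 1 ∨ x = A ∨ x = B ∨ x = A * B ∨ x = B * A ∨ x = A * (B * A) with hp
    have stepA : ∀ t : G₂ ⧸ H₂, p t → p (A * t) := by
      intro t ht
      rcases ht with rfl | rfl | rfl | rfl | rfl | rfl
      · exact Or.inr (Or.inl (mul_one A))
      · exact Or.inl qa
      · exact Or.inr (Or.inr (Or.inr (Or.inl rfl)))
      · exact Or.inr (Or.inr (Or.inl (qaa B)))
      · exact Or.inr (Or.inr (Or.inr (Or.inr (Or.inr rfl))))
      · exact Or.inr (Or.inr (Or.inr (Or.inr (Or.inl (qaa (B * A))))))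
    have stepB : ∀ t : G₂ ⧸ H₂, p t → p (B * t) := by
      intro t ht
      rcases ht with rfl | rfl | rfl | rfl | rfl | rfl
      · exact Or.inr (Or.inr (Or.inl (mul_one B)))
      · exact Or.inr (Or.inr (Or.inr (Or.inr (Or.inl rfl))))
      · exact Or.inl qb
      · exact Or.inr (Or.inr (Or.inr (Or.inr (Or.inr qbab))))
      · exact Or.inr (Or.inl (qbb A))
      · exact Or.inr (Or.inr (Or.inr (Or.inl (by rw [qbabg, qa, mul_one]))))
    have stepC : ∀ t : G₂ ⧸ H₂, p t → p (((c : G₂) : G₂ ⧸ H₂) * t) := by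
      intro t ht
      rw [hcq]
      rcases ht with rfl | rfl | rfl | rfl | rfl | rfl
      · exact Or.inr (Or.inr (Or.inr (Or.inr (Or.inr (mul_one _)))))
      · exact Or.inr (Or.inr (Or.inr (Or.inl (by
          simp only [mul_assoc]; rw [qa, mul_one]))))
      · exact Or.inr (Or.inr (Or.inr (Or.inr (Or.inl (by
          simp only [mul_assoc]; rw [qbab, qaa])))))
      · exact Or.inr (Or.inl (by simp only [mul_assoc]; rw [qaa, qb, mul_one]))
      · exact Or.inr (Or.inr (Or.inl (by simp only [mul_assoc]; rw [qbabg, qaa, qa, mul_one])))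
      · exact Or.inl (by simp only [mul_assoc]; rw [qaa, qbb, qa])
    have main : ∀ g : G₂, (∀ t : G₂ ⧸ H₂, p t → p ((g : G₂ ⧸ H₂) * t)) ∧
        (∀ t : G₂ ⧸ H₂, p t → p (((g : G₂ ⧸ H₂))⁻¹ * t)) := by
      intro g
      have hg : g ∈ (⊤ : Subgroup G₂) := trivial
      rw [← PresentedGroup.closure_range_of] at hg
      induction hg using Subgroup.closure_induction with
      | mem s hs =>
          obtain ⟨i, rfl⟩ := hs
          fin_cases i
          · refine ⟨stepA, fun t ht => ?_⟩
            show p (A⁻¹ * t)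
            rw [qAinv]
            exact stepA t ht
          · refine ⟨stepB, fun t ht => ?_⟩
            show p (B⁻¹ * t)
            rw [qBinv]
            exact stepB t ht
          · refine ⟨stepC, fun t ht => ?_⟩
            show p ((((c : G₂) : G₂ ⧸ H₂))⁻¹ * t)
            rw [qCinv]
            exact stepC t ht
      | one => exact ⟨fun t ht => by simpa using ht, fun t ht => by simpa using ht⟩
      | mul x y hx hy px py =>
          constructor
          · intro t ht
            rw [QuotientGroup.mk_mul, mul_assoc]
            exact px.1 _ (py.1 t ht)
          · intro t ht
            rw [QuotientGroup.mk_mul, mul_inv_rev, mul_assoc]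
            exact py.2 _ (px.2 t ht)
      | inv x hx px =>
          constructor
          · intro t ht
            rw [QuotientGroup.mk_inv]
            exact px.2 t ht
          · intro t ht
            rw [QuotientGroup.mk_inv, inv_inv]
            exact px.1 t ht
    intro x
    obtain ⟨g, rfl⟩ := QuotientGroup.mk_surjective x
    have h1 := (main g).1 1 (Or.inl rfl)
    rwa [mul_one] at h1
  refine ⟨hNormal, comm, ?_, ?_⟩
  · have hsur : Function.Surjective
        (fun i : Fin 6 => ![(1 : G₂ ⧸ H₂), A, B, A * B, B * A, A * (B * A)] i) := by
      intro x
      rcases cover x with h | h | h | h | h | h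
      · exact ⟨0, h.symm⟩
      · exact ⟨1, h.symm⟩
      · exact ⟨2, h.symm⟩
      · exact ⟨3, h.symm⟩
      · exact ⟨4, h.symm⟩
      · exact ⟨5, h.symm⟩
    simpa using Nat.card_le_card_of_surjective _ hsur
  · intro x
    rcases cover x with h | h | h | h | h | h
    · exact ⟨1, by simp, by rw [h, QuotientGroup.mk_one]⟩
    · exact ⟨a, by simp, h⟩
    · exact ⟨b, by simp, h⟩
    · exact ⟨a * b, by simp, by rw [h, QuotientGroup.mk_mul]⟩
    · exact ⟨b * a, by simp, by rw [h, QuotientGroup.mk_mul]⟩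
    · exact ⟨a * b * a, by simp, by rw [h, QuotientGroup.mk_mul, QuotientGroup.mk_mul, mul_assoc]⟩
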